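/- arXiv:1802.02403 — 2 statements merged into one kernel-verified Lean document; each statement's English description precedes it below -/
import Mathlib

section
/- Define for δ > 0 and integer k ≥ 0 the value p_k = P_∞(δ + k/2), where P_∞(x) = Z (x^H + K^H)^{a(ε−1)/H} x^{a−1} e^{−x/b}. Then there exist positive constants A(δ), B(δ) such that A(δ) ≤ P_∞(x)/p_k ≤ B(δ) for all x ∈ (δ + k/2, δ + (k+1)/2] and all integers k ≥ 0. -/
open Real Set

lemma aux_rpow {M u s : ℝ} (hM : 1 ≤ M) (h1 : M⁻¹ ≤ u) (h2 : u ≤ M) :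
    M ^ (-|s|) ≤ u ^ s ∧ u ^ s ≤ M ^ |s| := by
  have hM0 : (0:ℝ) < M := one_pos.trans_le hM
  have hu0 : (0:ℝ) < u := (inv_pos.mpr hM0).trans_le h1
  rcases le_or_gt 0 s with hs | hs
  · rw [abs_of_nonneg hs, Real.rpow_neg hM0.le, ← Real.inv_rpow hM0.le]
    exact ⟨Real.rpow_le_rpow (inv_pos.mpr hM0).le h1 hs,
           Real.rpow_le_rpow hu0.le h2 hs⟩
  · rw [abs_of_neg hs, neg_neg]
    refine ⟨Real.rpow_le_rpow_of_nonpos hu0 h2 hs.le, ?_⟩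
    have h3 : u ^ s ≤ (M⁻¹) ^ s :=
      Real.rpow_le_rpow_of_nonpos (inv_pos.mpr hM0) h1 hs.le
    rwa [Real.inv_rpow hM0.le, ← Real.rpow_neg hM0.le] at h3

theorem stmt_8 (a b K Z ε δ : ℝ) (H : ℤ) (P : ℝ → ℝ)
    (ha : 0 < a) (hb : 0 < b) (hK : 0 < K) (hZ : 0 < Z) (hδ : 0 < δ)
    (hε0 : 0 < ε) (hε1 : ε ≤ 1) (hH : H ≠ 0)
    (hP : ∀ x : ℝ,
      P x = Z * (x ^ H + K ^ H) ^ (a * (ε - 1) / (H : ℝ)) * x ^ (a - 1) * Real.exp (-x / b)) :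
    ∃ A B : ℝ, 0 < A ∧ 0 < B ∧
      ∀ k : ℕ, ∀ x ∈ Ioc (δ + k / 2) (δ + (k + 1) / 2),
        A ≤ P x / P (δ + k / 2) ∧ P x / P (δ + k / 2) ≤ B := by
  set c := a * (ε - 1) / (H : ℝ) with hc
  clear_value c
  set r : ℝ := 1 + 1 / (2 * δ) with hrdef
  have hr1 : (1:ℝ) < r := by
    have h0 : 0 < 1 / (2 * δ) := by positivity
    rw [hrdef]; linarith
  clear_value r
  have hr0 : (0:ℝ) < r := one_pos.trans hr1
  set M : ℝ := r ^ |(H:ℝ)| with hMdef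
  have hM1 : (1:ℝ) ≤ M := Real.one_le_rpow hr1.le (abs_nonneg _)
  have hMinv : M⁻¹ = r ^ (-|(H:ℝ)|) := by rw [Real.rpow_neg hr0.le, hMdef]
  clear_value M
  have hM0 : (0:ℝ) < M := one_pos.trans_le hM1
  refine ⟨M ^ (-|c|) * r ^ (-|a - 1|) * Real.exp (-(1 / (2 * b))),
    M ^ |c| * r ^ |a - 1| * 1,
    mul_pos (mul_pos (Real.rpow_pos_of_pos hM0 _) (Real.rpow_pos_of_pos hr0 _))
      (Real.exp_pos _),
    mul_pos (mul_pos (Real.rpow_pos_of_pos hM0 _) (Real.rpow_pos_of_pos hr0 _)) one_pos, ?_⟩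
  intro k x hx
  obtain ⟨hx1, hx2⟩ := hx
  set y : ℝ := δ + (k : ℝ) / 2 with hydef
  have hyδ : δ ≤ y := by
    have : (0:ℝ) ≤ (k : ℝ) / 2 := by positivity
    rw [hydef]; linarith
  have hxu' : δ + ((k : ℝ) + 1) / 2 = y + 1 / 2 := by rw [hydef]; ring
  clear_value y
  have hy0 : (0:ℝ) < y := lt_of_lt_of_le hδ hyδ
  have hxy : y < x := hx1
  have hx0 : (0:ℝ) < x := hy0.trans hxy
  have hxu : x ≤ y + 1 / 2 := by linarith [hxu' ▸ hx2]
  have hq1 : (1:ℝ) ≤ x / y := (one_le_div hy0).mpr hxy.le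
  have hqr : x / y ≤ r := by
    rw [div_le_iff₀ hy0, hrdef]
    have h3 : 1 / 2 ≤ y / (2 * δ) := by
      rw [le_div_iff₀ (by positivity)]; nlinarith
    have h4 : (1 + 1 / (2 * δ)) * y = y + y / (2 * δ) := by field_simp
    linarith
  have hqM : r⁻¹ ≤ x / y := le_trans (inv_le_one_of_one_le₀ hr1.le) hq1
  have hq0 : (0:ℝ) < x / y := by positivity
  have hw := aux_rpow hr1.le hqM hqr (s := (H:ℝ))
  have hw1 : M⁻¹ ≤ (x / y) ^ ((H:ℝ)) := hMinv ▸ hw.1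
  have hw2 : (x / y) ^ ((H:ℝ)) ≤ M := hMdef ▸ hw.2
  have hYpos : (0:ℝ) < y ^ ((H:ℝ)) + K ^ ((H:ℝ)) := by positivity
  have hXpos : (0:ℝ) < x ^ ((H:ℝ)) + K ^ ((H:ℝ)) := by positivity
  have hxqy : x ^ ((H:ℝ)) = (x / y) ^ ((H:ℝ)) * y ^ ((H:ℝ)) := by
    rw [← Real.mul_rpow hq0.le hy0.le, div_mul_cancel₀ _ hy0.ne']
  have hKp : (0:ℝ) < K ^ ((H:ℝ)) := Real.rpow_pos_of_pos hK _
  have hYp : (0:ℝ) < y ^ ((H:ℝ)) := Real.rpow_pos_of_pos hy0 _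
  have hFupper : x ^ ((H:ℝ)) + K ^ ((H:ℝ)) ≤ M * (y ^ ((H:ℝ)) + K ^ ((H:ℝ))) := by
    rw [hxqy]; nlinarith
  have hFlower : M⁻¹ * (y ^ ((H:ℝ)) + K ^ ((H:ℝ))) ≤ x ^ ((H:ℝ)) + K ^ ((H:ℝ)) := by
    have hMi1 : M⁻¹ ≤ 1 := inv_le_one_of_one_le₀ hM1
    have hMip : (0:ℝ) < M⁻¹ := inv_pos.mpr hM0
    rw [hxqy]; nlinarith
  have hu1 : M⁻¹ ≤ (x ^ ((H:ℝ)) + K ^ ((H:ℝ))) / (y ^ ((H:ℝ)) + K ^ ((H:ℝ))) :=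
    (le_div_iff₀ hYpos).mpr hFlower
  have hu2 : (x ^ ((H:ℝ)) + K ^ ((H:ℝ))) / (y ^ ((H:ℝ)) + K ^ ((H:ℝ))) ≤ M :=
    (div_le_iff₀ hYpos).mpr hFupper
  have hF := aux_rpow hM1 hu1 hu2 (s := c)
  have hQ := aux_rpow hr1.le hqM hqr (s := a - 1)
  have hE1 : Real.exp (-(1 / (2 * b))) ≤ Real.exp ((y - x) / b) := by
    apply Real.exp_le_exp.mpr
    have e : -(1 / (2 * b)) = (-(1/2)) / b := by field_simp
    rw [e]
    gcongr
    linarith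
  have hE2 : Real.exp ((y - x) / b) ≤ 1 := by
    rw [← Real.exp_zero]
    exact Real.exp_le_exp.mpr (div_nonpos_of_nonpos_of_nonneg (by linarith) hb.le)
  have hFyC : (0:ℝ) < (y ^ ((H:ℝ)) + K ^ ((H:ℝ))) ^ c := Real.rpow_pos_of_pos hYpos c
  have hya : (0:ℝ) < y ^ (a - 1) := Real.rpow_pos_of_pos hy0 _
  have hratio : P x / P y =
      ((x ^ ((H:ℝ)) + K ^ ((H:ℝ))) / (y ^ ((H:ℝ)) + K ^ ((H:ℝ)))) ^ c *
        (x / y) ^ (a - 1) * Real.exp ((y - x) / b) := by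
    rw [hP x, hP y, ← Real.rpow_intCast x H, ← Real.rpow_intCast y H, ← Real.rpow_intCast K H,
      Real.div_rpow hXpos.le hYpos.le, Real.div_rpow hx0.le hy0.le]
    have e2 : (y - x) / b = (-x / b) - (-y / b) := by field_simp; ring
    rw [e2, Real.exp_sub, div_mul_div_comm, div_mul_div_comm,
      div_eq_div_iff
        (mul_pos (mul_pos (mul_pos hZ hFyC) hya) (Real.exp_pos _)).ne'
        (mul_pos (mul_pos hFyC hya) (Real.exp_pos _)).ne']
    ring
  rw [hratio]
  have hFp : (0:ℝ) < ((x ^ ((H:ℝ)) + K ^ ((H:ℝ))) / (y ^ ((H:ℝ)) + K ^ ((H:ℝ)))) ^ c :=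
    Real.rpow_pos_of_pos (by positivity) _
  have hQp : (0:ℝ) < (x / y) ^ (a - 1) := Real.rpow_pos_of_pos hq0 _
  constructor
  · exact mul_le_mul (mul_le_mul hF.1 hQ.1 (Real.rpow_pos_of_pos hr0 _).le hFp.le) hE1
      (Real.exp_pos _).le (mul_nonneg hFp.le hQp.le)
  · exact mul_le_mul (mul_le_mul hF.2 hQ.2 hQp.le (Real.rpow_pos_of_pos hM0 _).le) hE2
      (Real.exp_pos _).le
      (mul_nonneg (Real.rpow_pos_of_pos hM0 _).le (Real.rpow_pos_of_pos hr0 _).le)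
end

section
/- Let m_k = p_k e^{(δ+k/2)/(2b)} where p_k = Z((δ+k/2)^H+K^H)^{a(ε−1)/H}(δ+k/2)^{a−1}e^{−(δ+k/2)/b}, and let M_j = ∑_{k=1}^{j−1} 1/m_k. Then there exists C > 0 such that m_k ∑_{j=k+1}^∞ M_j p_j ≤ C p_k for all k ∈ ℕ. -/
open Real Finset

private lemma aux_rpow_exp (c α : ℝ) (hα : 0 < α) :
    ∃ C : ℝ, 0 < C ∧ ∀ x : ℝ, 1 ≤ x → x ^ c ≤ C * Real.exp (α * x) := by
  rcases le_or_gt c 0 with hc | hc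
  · refine ⟨1, one_pos, fun x hx => ?_⟩
    have h1 : x ^ c ≤ 1 := Real.rpow_le_one_of_one_le_of_nonpos hx hc
    have h2 : (1:ℝ) ≤ Real.exp (α * x) :=
      Real.one_le_exp (by nlinarith)
    nlinarith
  · refine ⟨(c/α) ^ c * Real.exp (-c), by positivity, fun x hx => ?_⟩
    have hx0 : 0 < x := lt_of_lt_of_le one_pos hx
    have hca : 0 < c / α := by positivity
    have hlog : Real.log (x * (α / c)) ≤ x * (α / c) - 1 :=
      Real.log_le_sub_one_of_pos (by positivity)
    have hinv : α / c = (c/α)⁻¹ := by rw [inv_div]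
    rw [Real.log_mul hx0.ne' (by positivity), hinv, Real.log_inv] at hlog
    have h := mul_le_mul_of_nonneg_left hlog hc.le
    have hc' : c * (x * (c/α)⁻¹) = α * x := by field_simp
    have key : Real.log x * c ≤ Real.log (c/α) * c - c + α * x := by nlinarith
    calc x ^ c = Real.exp (Real.log x * c) := by
          rw [Real.rpow_def_of_pos hx0]
      _ ≤ Real.exp (Real.log (c/α) * c - c + α * x) := Real.exp_le_exp.mpr key
      _ = (c/α)^c * Real.exp (-c) * Real.exp (α * x) := by
          rw [Real.rpow_def_of_pos hca, ← Real.exp_add, ← Real.exp_add]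
          ring_nf

private lemma aux_one_add (c s α : ℝ) (hs : 0 < s) (hα : 0 < α) :
    ∃ C : ℝ, 0 < C ∧ ∀ t : ℝ, 0 ≤ t → (1 + t / s) ^ c ≤ C * Real.exp (α * t) := by
  obtain ⟨C, hC, hCb⟩ := aux_rpow_exp c (α * s) (by positivity)
  refine ⟨C * Real.exp (α * s), by positivity, fun t ht => ?_⟩
  have h1 : (1:ℝ) ≤ 1 + t / s := by nlinarith [div_nonneg ht hs.le]
  have h2 := hCb _ h1
  have h3 : α * s * (1 + t/s) = α * s + α * t := by field_simp
  rw [h3, Real.exp_add] at h2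
  calc (1+t/s)^c ≤ C * (Real.exp (α*s) * Real.exp (α*t)) := h2
    _ = C * Real.exp (α*s) * Real.exp (α*t) := by ring

theorem stmt_10 (a b K Z ε δ : ℝ) (H : ℤ) (p m M : ℕ → ℝ)
    (ha : 0 < a) (hb : 0 < b) (hK : 0 < K) (hZ : 0 < Z) (hδ : 0 < δ)
    (hε0 : 0 < ε) (hε1 : ε ≤ 1) (hH : H ≠ 0)
    (hp : ∀ k : ℕ, p k = Z * ((δ + k / 2) ^ H + K ^ H) ^ (a * (ε - 1) / (H : ℝ))
        * (δ + k / 2) ^ (a - 1) * Real.exp (-(δ + k / 2) / b))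
    (hm : ∀ k : ℕ, m k = p k * Real.exp ((δ + k / 2) / (2 * b)))
    (hM : ∀ j : ℕ, M j = ∑ i ∈ Finset.Ico 1 j, 1 / m i) :
    ∃ C : ℝ, 0 < C ∧ ∀ k : ℕ,
      m k * (∑' j : ℕ, M (k + 1 + j) * p (k + 1 + j)) ≤ C * p k := by
  have hbne : b ≠ 0 := ne_of_gt hb
  have hδne : δ ≠ 0 := ne_of_gt hδ
  -- notation
  set X : ℕ → ℝ := fun k => δ + (k:ℝ)/2 with hX
  have hXpos : ∀ k, 0 < X k := fun k => by positivity
  have hXmono : ∀ {i j : ℕ}, i ≤ j → X i ≤ X j := by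
    intro i j hij
    have : (i:ℝ) ≤ j := Nat.cast_le.mpr hij
    simp only [hX]; linarith
  set A : ℕ → ℝ := fun k => ((X k) ^ H + K ^ H) ^ (a * (ε - 1) / (H : ℝ)) with hA
  have hbase_pos : ∀ k, 0 < (X k) ^ H + K ^ H := fun k =>
    add_pos (zpow_pos (hXpos k) H) (zpow_pos hK H)
  have hApos : ∀ k, 0 < A k := fun k => Real.rpow_pos_of_pos (hbase_pos k) _
  have hBpos : ∀ k, 0 < (X k) ^ (a-1) := fun k => Real.rpow_pos_of_pos (hXpos k) _
  have hppos : ∀ k, 0 < p k := by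
    intro k
    rw [hp k]
    have h1 : (0:ℝ) < ((δ + (k:ℝ)/2) ^ H + K ^ H) ^ (a * (ε - 1) / (H : ℝ)) :=
      Real.rpow_pos_of_pos (hbase_pos k) _
    have h2 : (0:ℝ) < (δ + (k:ℝ)/2) ^ (a-1) := Real.rpow_pos_of_pos (hXpos k) _
    have h3 := Real.exp_pos (-(δ + (k:ℝ)/2)/b)
    exact mul_pos (mul_pos (mul_pos hZ h1) h2) h3
  have hmpos : ∀ k, 0 < m k := by
    intro k
    rw [hm k]
    exact mul_pos (hppos k) (Real.exp_pos _)
  have hMnonneg : ∀ j, 0 ≤ M j := by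
    intro j
    rw [hM j]
    exact Finset.sum_nonneg fun i _ => le_of_lt (by
      rw [one_div]; exact inv_pos.mpr (hmpos i))
  -- clean formula for m
  have hmeq : ∀ k, m k = Z * A k * (X k) ^ (a-1) * Real.exp (-(X k)/(2*b)) := by
    intro k
    rw [hm k, hp k]
    have hee : Real.exp (-(X k)/b) * Real.exp ((X k)/(2*b)) = Real.exp (-(X k)/(2*b)) := by
      rw [← Real.exp_add]; congr 1; field_simp; ring
    calc Z * ((X k) ^ H + K ^ H) ^ (a * (ε - 1) / (H : ℝ)) * (X k) ^ (a-1)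
          * Real.exp (-(X k)/b) * Real.exp ((X k)/(2*b))
        = Z * A k * (X k) ^ (a-1) * (Real.exp (-(X k)/b) * Real.exp ((X k)/(2*b))) := by
          simp only [hA]; ring
      _ = Z * A k * (X k) ^ (a-1) * Real.exp (-(X k)/(2*b)) := by rw [hee]
  -- A is antitone
  have hAanti : ∀ i j : ℕ, i ≤ j → A j ≤ A i := by
    intro i j hij
    have hxij : X i ≤ X j := hXmono hij
    rcases hH.lt_or_gt with hHneg | hHpos
    · have h1 : (X j) ^ H ≤ (X i) ^ H := by
        rw [← Real.rpow_intCast (X i), ← Real.rpow_intCast (X j)]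
        exact Real.rpow_le_rpow_of_nonpos (hXpos i) hxij (by exact_mod_cast hHneg.le)
      have hβ : 0 ≤ a * (ε - 1) / (H : ℝ) := by
        apply div_nonneg_iff.mpr
        exact Or.inr ⟨by nlinarith, by exact_mod_cast hHneg.le⟩
      exact Real.rpow_le_rpow (hbase_pos j).le (by linarith) hβ
    · have h1 : (X i) ^ H ≤ (X j) ^ H := by
        rw [← Real.rpow_intCast (X i), ← Real.rpow_intCast (X j)]
        apply Real.rpow_le_rpow (hXpos i).le hxij
        exact_mod_cast hHpos.le
      have hβ : a * (ε - 1) / (H : ℝ) ≤ 0 := by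
        apply div_nonpos_iff.mpr
        exact Or.inr ⟨by nlinarith, by exact_mod_cast hHpos.le⟩
      exact Real.rpow_le_rpow_of_nonpos (hbase_pos i) (by linarith) hβ
  -- the power factor comparison
  have hB : ∃ C2 : ℝ, 0 < C2 ∧ ∀ i j : ℕ, i ≤ j →
      (X j) ^ (a-1) ≤ C2 * Real.exp ((1/(8*b)) * ((j:ℝ) - i)) * (X i) ^ (a-1) := by
    rcases le_or_gt a 1 with ha1 | ha1
    · refine ⟨1, one_pos, fun i j hij => ?_⟩
      have h1 : (X j) ^ (a-1) ≤ (X i) ^ (a-1) :=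
        Real.rpow_le_rpow_of_nonpos (hXpos i) (hXmono hij) (by linarith)
      have ht : (0:ℝ) ≤ (j:ℝ) - i := by
        have : (i:ℝ) ≤ j := Nat.cast_le.mpr hij
        linarith
      have h2 : (1:ℝ) ≤ Real.exp ((1/(8*b)) * ((j:ℝ) - i)) :=
        Real.one_le_exp (mul_nonneg (by positivity) ht)
      nlinarith [hBpos i]
    · obtain ⟨C2, hC2, hC2b⟩ := aux_one_add (a-1) (2*δ) (1/(8*b)) (by positivity) (by positivity)
      refine ⟨C2, hC2, fun i j hij => ?_⟩
      have ht : (0:ℝ) ≤ (j:ℝ) - i := by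
        have : (i:ℝ) ≤ j := Nat.cast_le.mpr hij
        linarith
      set t : ℝ := (j:ℝ) - i with htdef
      have hXi := hXpos i
      have hXj' : X j = X i * (1 + t/2 / X i) := by
        field_simp
        simp only [hX, htdef]; ring
      have hsplit : (X j) ^ (a-1) = (X i) ^ (a-1) * (1 + t/2 / X i) ^ (a-1) := by
        rw [hXj', Real.mul_rpow (hXpos i).le (by positivity)]
      have hXiδ : δ ≤ X i := by
        simp only [hX]
        have : (0:ℝ) ≤ (i:ℝ) := Nat.cast_nonneg i
        linarith
      have hb0 : t/2 / X i ≤ t / (2*δ) := by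
        have h1 : t/2 / X i ≤ t/2 / δ :=
          div_le_div_of_nonneg_left (by linarith) hδ hXiδ
        have h2 : t/2/δ = t/(2*δ) := by ring
        linarith [h2 ▸ h1]
      have hb1 : (1 + t/2 / X i) ^ (a-1) ≤ (1 + t / (2*δ)) ^ (a-1) :=
        Real.rpow_le_rpow (by positivity) (by linarith) (by linarith)
      have hb2 := hC2b t ht
      calc (X j) ^ (a-1) = (X i) ^ (a-1) * (1 + t/2 / X i) ^ (a-1) := hsplit
        _ ≤ (X i) ^ (a-1) * (C2 * Real.exp ((1/(8*b)) * t)) :=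
            mul_le_mul_of_nonneg_left (le_trans hb1 hb2) (hBpos i).le
        _ = C2 * Real.exp ((1/(8*b)) * t) * (X i) ^ (a-1) := by ring
  obtain ⟨C2, hC2, hC2b⟩ := hB
  -- ratio bound for m
  have hstep : ∀ i j : ℕ, i ≤ j →
      m j ≤ C2 * Real.exp (-(1/(8*b)) * ((j:ℝ) - i)) * m i := by
    intro i j hij
    set t : ℝ := (j:ℝ) - i with htdef
    have ht : (0:ℝ) ≤ t := by
      have : (i:ℝ) ≤ j := Nat.cast_le.mpr hij
      simp only [htdef]; linarith
    have hXjXi : X j = X i + t/2 := by simp only [hX, htdef]; ring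
    have hexp : Real.exp (-(X j)/(2*b)) = Real.exp (-(X i)/(2*b)) * Real.exp (-t/(4*b)) := by
      rw [← Real.exp_add]; congr 1; rw [hXjXi]; field_simp; ring
    have hfac : Z * A j * (X j) ^ (a-1)
        ≤ (C2 * Real.exp ((1/(8*b)) * t)) * (Z * A i * (X i) ^ (a-1)) := by
      have h1 := hAanti i j hij
      have h2 := hC2b i j hij
      rw [← htdef] at h2
      have hAi := hApos i
      have hAj := hApos j
      have hBi := hBpos i
      have hBj := hBpos j
      have hE := Real.exp_pos ((1/(8*b)) * t)
      nlinarith [mul_le_mul h1 h2 hBj.le hAi.le]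
    have hexp2 : Real.exp ((1/(8*b)) * t) * Real.exp (-t/(4*b))
        = Real.exp (-(1/(8*b)) * t) := by
      rw [← Real.exp_add]; congr 1; field_simp; ring
    calc m j = Z * A j * (X j) ^ (a-1) * Real.exp (-(X j)/(2*b)) := hmeq j
      _ ≤ (C2 * Real.exp ((1/(8*b)) * t)) * (Z * A i * (X i) ^ (a-1))
            * Real.exp (-(X j)/(2*b)) :=
          mul_le_mul_of_nonneg_right hfac (Real.exp_pos _).le
      _ = C2 * Real.exp (-(1/(8*b)) * t) * (Z * A i * (X i) ^ (a-1) * Real.exp (-(X i)/(2*b))) := by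
          rw [hexp, ← hexp2]; ring
      _ = C2 * Real.exp (-(1/(8*b)) * t) * m i := by rw [← hmeq i]
  -- geometric constants
  set r1 : ℝ := Real.exp (-(1/(8*b))) with hr1
  have hr1pos : 0 < r1 := Real.exp_pos _
  have hr1lt : r1 < 1 := by
    rw [hr1, Real.exp_lt_one_iff]
    have : (0:ℝ) < 1/(8*b) := by positivity
    linarith
  set r2 : ℝ := Real.exp (-(1/(4*b))) with hr2
  have hr2pos : 0 < r2 := Real.exp_pos _
  have hr2lt : r2 < 1 := by
    rw [hr2, Real.exp_lt_one_iff]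
    have : (0:ℝ) < 1/(4*b) := by positivity
    linarith
  -- M j * m j ≤ C0
  set C0 : ℝ := C2 * (1 - r1)⁻¹ with hC0
  have hC0pos : 0 < C0 := mul_pos hC2 (inv_pos.mpr (by linarith))
  have hMm : ∀ j : ℕ, M j * m j ≤ C0 := by
    intro j
    rw [hM j, Finset.sum_mul]
    have hterm : ∀ i ∈ Finset.Ico 1 j, 1 / m i * m j ≤ C2 * r1 ^ (j - i) := by
      intro i hi
      rw [Finset.mem_Ico] at hi
      have hij : i ≤ j := hi.2.le
      have h := hstep i j hij
      have hmipos := hmpos i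
      have hpow : r1 ^ (j - i) = Real.exp (-(1/(8*b)) * ((j:ℝ) - i)) := by
        rw [hr1, ← Real.exp_nat_mul]
        congr 1
        have hc : ((j - i : ℕ) : ℝ) = (j:ℝ) - i := by
          rw [Nat.cast_sub hij]
        rw [hc]; ring
      rw [hpow, div_mul_eq_mul_div, one_mul, div_le_iff₀ hmipos]
      linarith [h]
    calc ∑ i ∈ Finset.Ico 1 j, 1 / m i * m j ≤ ∑ i ∈ Finset.Ico 1 j, C2 * r1 ^ (j - i) :=
          Finset.sum_le_sum hterm
      _ = C2 * ∑ i ∈ Finset.Ico 1 j, r1 ^ (j - i) := by rw [Finset.mul_sum]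
      _ ≤ C2 * (1 - r1)⁻¹ := by
          apply mul_le_mul_of_nonneg_left ?_ hC2.le
          calc ∑ i ∈ Finset.Ico 1 j, r1 ^ (j - i)
              ≤ ∑ i ∈ Finset.range j, r1 ^ (j - i) := by
                rw [Finset.range_eq_Ico]
                apply Finset.sum_le_sum_of_subset_of_nonneg
                · exact Finset.Ico_subset_Ico (Nat.zero_le 1) le_rfl
                · intro i _ _; positivity
            _ = ∑ i ∈ Finset.range j, r1 ^ (i + 1) := by
                rw [← Finset.sum_range_reflect (fun i => r1 ^ (i+1)) j]
                apply Finset.sum_congr rfl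
                intro i hi
                rw [Finset.mem_range] at hi
                congr 1
                omega
            _ ≤ ∑ i ∈ Finset.range j, r1 ^ i := by
                apply Finset.sum_le_sum
                intro i _
                exact pow_le_pow_of_le_one hr1pos.le hr1lt.le (Nat.le_succ i)
            _ ≤ ∑' i : ℕ, r1 ^ i :=
                Summable.sum_le_tsum _ (fun i _ => by positivity)
                  (summable_geometric_of_lt_one hr1pos.le hr1lt)
            _ = (1 - r1)⁻¹ := tsum_geometric_of_lt_one hr1pos.le hr1lt
  -- p in terms of m
  have hpm : ∀ j : ℕ, p j = m j * Real.exp (-(X j)/(2*b)) := by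
    intro j
    rw [hm j, mul_assoc, ← Real.exp_add]
    have hz : (δ + (j:ℝ)/2)/(2*b) + -(X j)/(2*b) = 0 := by
      simp only [hX]; ring
    rw [hz, Real.exp_zero, mul_one]
  have hMp : ∀ j : ℕ, M j * p j ≤ C0 * Real.exp (-(X j)/(2*b)) := by
    intro j
    rw [hpm j]
    calc M j * (m j * Real.exp (-(X j)/(2*b))) = (M j * m j) * Real.exp (-(X j)/(2*b)) := by ring
      _ ≤ C0 * Real.exp (-(X j)/(2*b)) :=
          mul_le_mul_of_nonneg_right (hMm j) (Real.exp_pos _).le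
  -- final constant
  have hCpos : 0 < C0 * (1 - r2)⁻¹ := mul_pos hC0pos (inv_pos.mpr (by linarith))
  refine ⟨C0 * (1 - r2)⁻¹, hCpos, fun k => ?_⟩
  set g : ℕ → ℝ := fun j => (C0 * Real.exp (-(X (k+1))/(2*b))) * r2 ^ j with hg
  have hgeq : ∀ j : ℕ, C0 * Real.exp (-(X (k+1+j))/(2*b)) = g j := by
    intro j
    have hexpsplit : Real.exp (-(X (k+1+j))/(2*b)) = Real.exp (-(X (k+1))/(2*b)) * r2 ^ j := by
      rw [hr2, ← Real.exp_nat_mul, ← Real.exp_add]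
      congr 1
      simp only [hX]
      push_cast
      field_simp
      ring
    simp only [hg]
    rw [hexpsplit]
    ring
  have hgsummable : Summable g :=
    (summable_geometric_of_lt_one hr2pos.le hr2lt).mul_left _
  have htermle : ∀ j : ℕ, M (k+1+j) * p (k+1+j) ≤ g j := by
    intro j
    calc M (k+1+j) * p (k+1+j) ≤ C0 * Real.exp (-(X (k+1+j))/(2*b)) := hMp _
      _ = g j := hgeq j
  have htermnonneg : ∀ j : ℕ, 0 ≤ M (k+1+j) * p (k+1+j) :=
    fun j => mul_nonneg (hMnonneg _) (hppos _).le
  have hsummable : Summable (fun j : ℕ => M (k+1+j) * p (k+1+j)) :=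
    Summable.of_nonneg_of_le htermnonneg htermle hgsummable
  have htsum : (∑' j : ℕ, M (k+1+j) * p (k+1+j))
      ≤ (C0 * Real.exp (-(X (k+1))/(2*b))) * (1 - r2)⁻¹ := by
    calc (∑' j : ℕ, M (k+1+j) * p (k+1+j)) ≤ ∑' j : ℕ, g j :=
          Summable.tsum_le_tsum htermle hsummable hgsummable
      _ = (C0 * Real.exp (-(X (k+1))/(2*b))) * (1 - r2)⁻¹ := by
          simp only [hg]
          rw [tsum_mul_left, tsum_geometric_of_lt_one hr2pos.le hr2lt]
  have hmk : m k * Real.exp (-(X (k+1))/(2*b)) ≤ p k := by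
    rw [hm k, mul_assoc, ← Real.exp_add]
    have harg : (δ + (k:ℝ)/2)/(2*b) + -(X (k+1))/(2*b) = -(1/(4*b)) := by
      simp only [hX]
      push_cast
      field_simp
      ring
    rw [harg]
    have hle1 : Real.exp (-(1/(4*b))) ≤ 1 := by
      rw [Real.exp_le_one_iff]
      have : (0:ℝ) < 1/(4*b) := by positivity
      linarith
    calc p k * Real.exp (-(1/(4*b))) ≤ p k * 1 :=
          mul_le_mul_of_nonneg_left hle1 (hppos k).le
      _ = p k := mul_one _
  calc m k * (∑' j : ℕ, M (k+1+j) * p (k+1+j))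
      ≤ m k * ((C0 * Real.exp (-(X (k+1))/(2*b))) * (1 - r2)⁻¹) :=
        mul_le_mul_of_nonneg_left htsum (hmpos k).le
    _ = (C0 * (1 - r2)⁻¹) * (m k * Real.exp (-(X (k+1))/(2*b))) := by ring
    _ ≤ (C0 * (1 - r2)⁻¹) * p k :=
        mul_le_mul_of_nonneg_left hmk hCpos.le
end
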